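/- Let A ∈ ℝ^{N × p_R p_L}, a ∈ ℝ^{p_L × m_L}, b ∈ ℝ^{p_R × m_R}, and f ∈ ℝ^{m_R m_L × k}. Then vec[A (b ⊗ a) f] = (fᵀ ⊗ A) Π (I_{p_R m_R} ⊗ vec(a)) vec(b), where Π = I_{m_R} ⊗ [(I_{m_L} ⊗ K_{p_R,p_L}) K_{p_L m_L, p_R}]. In particular, for fixed a and f the map b ↦ vec[A (b ⊗ a) f] is linear in vec(b) with coefficient matrix (fᵀ ⊗ A) Π (I_{p_R m_R} ⊗ vec(a)). -/
import Mathlib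


open Matrix MeasureTheory ProbabilityTheory

/-- Column-stacking vectorization of a matrix: for `A : Matrix (Fin m) (Fin n) ℝ`,
`vecF A` is the vector in `ℝ^{nm}` with `vecF A (i + m*j) = A i j`
(the columns of `A` stacked on top of each other). -/
def vecF {m n : ℕ} (A : Matrix (Fin m) (Fin n) ℝ) : Fin (n * m) → ℝ :=
  fun x => A (finProdFinEquiv.symm x).2 (finProdFinEquiv.symm x).1

/-- Kronecker product of matrices with flat `Fin` indices:
`(A ⊗ B)_{(i-1)p+k, (j-1)q+l} = A i j * B k l`. -/
def kronF {m n p q : ℕ} (A : Matrix (Fin m) (Fin n) ℝ) (B : Matrix (Fin p) (Fin q) ℝ) :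
    Matrix (Fin (m * p)) (Fin (n * q)) ℝ :=
  Matrix.of fun i j =>
    A (finProdFinEquiv.symm i).1 (finProdFinEquiv.symm j).1 *
      B (finProdFinEquiv.symm i).2 (finProdFinEquiv.symm j).2

/-- Kronecker product of vectors: `(v ⊗ w)_{(i-1)n+j} = v i * w j`. -/
def vkronF {m n : ℕ} (v : Fin m → ℝ) (w : Fin n → ℝ) : Fin (m * n) → ℝ :=
  fun x => v (finProdFinEquiv.symm x).1 * w (finProdFinEquiv.symm x).2

/-- The commutation matrix `K_{m,n}`, the unique `mn × mn` matrix such that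
`K_{m,n} vec(A) = vec(Aᵀ)` for every `A : Matrix (Fin m) (Fin n) ℝ`. -/
def commF (m n : ℕ) : Matrix (Fin (m * n)) (Fin (n * m)) ℝ :=
  Matrix.of fun p q =>
    if (finProdFinEquiv.symm p : Fin m × Fin n) = (finProdFinEquiv.symm q : Fin n × Fin m).swap
    then 1 else 0

/-- A vector viewed as a one-column matrix. -/
def colM {n : ℕ} (v : Fin n → ℝ) : Matrix (Fin n) (Fin 1) ℝ :=
  Matrix.of fun i _ => v i

/-- Cast a vector along an equality of dimensions (the identity map on `ℝ^m`). -/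
def castV {m m' : ℕ} (h : m = m') (v : Fin m → ℝ) : Fin m' → ℝ :=
  v ∘ (finCongr h.symm)

/-- The matrix `Π = I_{r₂} ⊗ [(I_{r₄} ⊗ K_{r₁,r₃}) K_{r₃r₄,r₁}]` of Lemma 1
(dimension-equalities are handled by the identity reindexing `finCongr`). -/
noncomputable def PiMat (r1 r2 r3 r4 : ℕ) :
    Matrix (Fin (r2 * (r4 * (r1 * r3)))) (Fin (r2 * (r1 * (r4 * r3)))) ℝ :=
  kronF (1 : Matrix (Fin r2) (Fin r2) ℝ)
    ((kronF (1 : Matrix (Fin r4) (Fin r4) ℝ) (commF r1 r3)) *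
      (Matrix.reindex (finCongr (show (r4 * r3) * r1 = r4 * (r3 * r1) by ring)) (Equiv.refl _)
        (commF (r4 * r3) r1)))

open Finset

private lemma sumPairE {M : Type*} [AddCommMonoid M] {m n : ℕ} (g : Fin (m*n) → M) :
    ∑ x, g x = ∑ i : Fin m, ∑ j : Fin n, g (finProdFinEquiv (i,j)) := by
  rw [← Equiv.sum_comp finProdFinEquiv g, Fintype.sum_prod_type]

private lemma e_cast_assoc {a b c : ℕ} (h : a*(b*c) = (a*b)*c) (i : Fin a) (j : Fin b) (k : Fin c) :
    finCongr h (finProdFinEquiv (i, finProdFinEquiv (j,k))) = finProdFinEquiv (finProdFinEquiv (i,j), k) := by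
  apply Fin.ext; simp [finProdFinEquiv]; ring

private lemma e_cast_assoc' {a b c : ℕ} (h : (a*b)*c = a*(b*c)) (i : Fin a) (j : Fin b) (k : Fin c) :
    finCongr h (finProdFinEquiv (finProdFinEquiv (i,j), k)) = finProdFinEquiv (i, finProdFinEquiv (j,k)) := by
  apply Fin.ext; simp [finProdFinEquiv]; ring

private lemma vecF_apply {m n : ℕ} (A : Matrix (Fin m) (Fin n) ℝ) (i : Fin m) (j : Fin n) :
    vecF A (finProdFinEquiv (j, i)) = A i j := by
  simp only [vecF, Equiv.symm_apply_apply]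

private lemma kronF_apply {m n p q : ℕ} (A : Matrix (Fin m) (Fin n) ℝ) (B : Matrix (Fin p) (Fin q) ℝ)
    (i : Fin m) (j : Fin n) (k : Fin p) (l : Fin q) :
    kronF A B (finProdFinEquiv (i, k)) (finProdFinEquiv (j, l)) = A i j * B k l := by
  simp only [kronF, Matrix.of_apply, Equiv.symm_apply_apply]

private lemma commF_row_sum {m n : ℕ} (g : Fin (n*m) → ℝ) (i : Fin m) (j : Fin n) :
    ∑ l, commF m n (finProdFinEquiv (i,j)) l * g l = g (finProdFinEquiv (j,i)) := by
  rw [sumPairE]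
  simp only [commF, Matrix.of_apply, Equiv.symm_apply_apply, Prod.swap_prod_mk,
    Prod.mk.injEq, ite_and, ite_mul, one_mul, zero_mul]
  rw [Finset.sum_comm]
  simp

private lemma kron_one_row_sum {r p q : ℕ} (B : Matrix (Fin p) (Fin q) ℝ) (g : Fin (r*q) → ℝ)
    (i : Fin r) (k : Fin p) :
    ∑ l, kronF (1 : Matrix (Fin r) (Fin r) ℝ) B (finProdFinEquiv (i,k)) l * g l
      = ∑ l2, B k l2 * g (finProdFinEquiv (i,l2)) := by
  rw [sumPairE]
  simp [kronF_apply, Matrix.one_apply, ite_mul, mul_ite]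

private lemma kron_one_mulVec {r p q : ℕ} (B : Matrix (Fin p) (Fin q) ℝ) (v : Fin (r*q) → ℝ)
    (i : Fin r) (k : Fin p) :
    (kronF (1 : Matrix (Fin r) (Fin r) ℝ) B *ᵥ v) (finProdFinEquiv (i,k))
      = ∑ l2, B k l2 * v (finProdFinEquiv (i,l2)) := by
  rw [Matrix.mulVec, dotProduct]
  exact kron_one_row_sum B v i k

private lemma kronF_mul {m n p q r s : ℕ} (A : Matrix (Fin m) (Fin n) ℝ)
    (B : Matrix (Fin p) (Fin q) ℝ) (C : Matrix (Fin n) (Fin r) ℝ) (D : Matrix (Fin q) (Fin s) ℝ) :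
    kronF A B * kronF C D = kronF (A*C) (B*D) := by
  ext x y
  obtain ⟨⟨i,k⟩, rfl⟩ := finProdFinEquiv.surjective x
  obtain ⟨⟨j,l⟩, rfl⟩ := finProdFinEquiv.surjective y
  rw [Matrix.mul_apply, kronF_apply, Matrix.mul_apply, Matrix.mul_apply, sumPairE,
    Finset.sum_mul_sum]
  simp only [kronF_apply]
  refine Finset.sum_congr rfl fun u _ => Finset.sum_congr rfl fun v _ => by ring

private lemma kron_mulVec {m n p q : ℕ} (A : Matrix (Fin m) (Fin n) ℝ)
    (B : Matrix (Fin p) (Fin q) ℝ) (v : Fin (n*q) → ℝ) (i : Fin m) (k : Fin p) :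
    (kronF A B *ᵥ v) (finProdFinEquiv (i,k))
      = ∑ j, ∑ l, A i j * B k l * v (finProdFinEquiv (j,l)) := by
  rw [Matrix.mulVec, dotProduct, sumPairE]
  simp only [kronF_apply]

private lemma castV_apply {m m' : ℕ} (h : m = m') (v : Fin m → ℝ) (x : Fin m') :
    castV h v x = v (finCongr h.symm x) := rfl

/-- `vec[A (b ⊗ a) f] = (fᵀ ⊗ A) Π (I_{p_R m_R} ⊗ vec(a)) vec(b)`:
the map `b ↦ vec[A (b ⊗ a) f]` is linear in `vec(b)` with this coefficient matrix. -/
theorem vec_A_kron_f_linear_in_b (N pR pL mR mL k : ℕ)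
    (A : Matrix (Fin N) (Fin (pR * pL)) ℝ) (a : Matrix (Fin pL) (Fin mL) ℝ)
    (b : Matrix (Fin pR) (Fin mR) ℝ) (f : Matrix (Fin (mR * mL)) (Fin k) ℝ) :
    vecF (A * kronF b a * f) =
      kronF fᵀ A *ᵥ
        castV (show mR * (mL * (pR * pL)) = (mR * mL) * (pR * pL) by ring)
          (PiMat pR mR pL mL *ᵥ
            castV (show (mR * pR) * (mL * pL) = mR * (pR * (mL * pL)) by ring)
              (kronF (1 : Matrix (Fin (mR * pR)) (Fin (mR * pR)) ℝ) (colM (vecF a)) *ᵥ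
                castV (show mR * pR = (mR * pR) * 1 by ring) (vecF b))) := by
  -- Step 1: `castV (vecF b)` at `e (y, z0)` is `vecF b y`.
  have hb : ∀ (y : Fin (mR * pR)) (z0 : Fin 1),
      castV (show mR * pR = (mR * pR) * 1 by ring) (vecF b) (finProdFinEquiv (y, z0))
        = vecF b y := by
    intro y z0
    obtain rfl : z0 = 0 := Subsingleton.elim z0 0
    simp only [castV, Function.comp_apply]
    congr 1
    apply Fin.ext
    simp [finProdFinEquiv]
  -- Step 2: the Kronecker with `vec a` as a column.
  have hT : ∀ (y : Fin (mR * pR)) (z : Fin (mL * pL)),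
      (kronF (1 : Matrix (Fin (mR * pR)) (Fin (mR * pR)) ℝ) (colM (vecF a)) *ᵥ
          castV (show mR * pR = (mR * pR) * 1 by ring) (vecF b)) (finProdFinEquiv (y, z))
        = vecF a z * vecF b y := by
    intro y z
    rw [kron_one_mulVec, Fin.sum_univ_one, hb]
    simp [colM]
  -- Step 3: after the associativity cast.
  have hS : ∀ (u1 : Fin mR) (v1 : Fin pR) (z : Fin (mL * pL)),
      castV (show (mR * pR) * (mL * pL) = mR * (pR * (mL * pL)) by ring)
          (kronF (1 : Matrix (Fin (mR * pR)) (Fin (mR * pR)) ℝ) (colM (vecF a)) *ᵥ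
            castV (show mR * pR = (mR * pR) * 1 by ring) (vecF b))
          (finProdFinEquiv (u1, finProdFinEquiv (v1, z)))
        = vecF a z * b v1 u1 := by
    intro u1 v1 z
    rw [castV_apply, e_cast_assoc, hT, vecF_apply]
  -- Step 4: decompose `PiMat` as a product of two Kronecker factors.
  have hPi : PiMat pR mR pL mL =
      kronF (1 : Matrix (Fin mR) (Fin mR) ℝ)
          (kronF (1 : Matrix (Fin mL) (Fin mL) ℝ) (commF pR pL)) *
        kronF (1 : Matrix (Fin mR) (Fin mR) ℝ)
          (Matrix.reindex (finCongr (show (mL * pL) * pR = mL * (pL * pR) by ring))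
            (Equiv.refl _) (commF (mL * pL) pR)) := by
    rw [kronF_mul, Matrix.one_mul]
    rfl
  -- Step 5: the second Kronecker factor applied to `S`.
  have hS1 : ∀ (u1 : Fin mR) (u2 : Fin mL) (v2 : Fin pL) (v1 : Fin pR),
      (kronF (1 : Matrix (Fin mR) (Fin mR) ℝ)
          (Matrix.reindex (finCongr (show (mL * pL) * pR = mL * (pL * pR) by ring))
            (Equiv.refl _) (commF (mL * pL) pR)) *ᵥ
        castV (show (mR * pR) * (mL * pL) = mR * (pR * (mL * pL)) by ring)
          (kronF (1 : Matrix (Fin (mR * pR)) (Fin (mR * pR)) ℝ) (colM (vecF a)) *ᵥ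
            castV (show mR * pR = (mR * pR) * 1 by ring) (vecF b)))
        (finProdFinEquiv (u1, finProdFinEquiv (u2, finProdFinEquiv (v2, v1))))
        = a v2 u2 * b v1 u1 := by
    intro u1 u2 v2 v1
    rw [kron_one_mulVec]
    simp only [Matrix.reindex_apply, Matrix.submatrix_apply, Equiv.refl_symm, Equiv.coe_refl,
      id_eq, finCongr_symm]
    rw [e_cast_assoc (show (mL * pL) * pR = mL * (pL * pR) by ring).symm u2 v2 v1,
      commF_row_sum (fun l => _) (finProdFinEquiv (u2, v2)) v1, hS, vecF_apply]
  -- Step 6: the value of `Π *ᵥ S` at decomposed indices.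
  have hW : ∀ (u1 : Fin mR) (u2 : Fin mL) (v1 : Fin pR) (v2 : Fin pL),
      (PiMat pR mR pL mL *ᵥ
          castV (show (mR * pR) * (mL * pL) = mR * (pR * (mL * pL)) by ring)
            (kronF (1 : Matrix (Fin (mR * pR)) (Fin (mR * pR)) ℝ) (colM (vecF a)) *ᵥ
              castV (show mR * pR = (mR * pR) * 1 by ring) (vecF b)))
        (finProdFinEquiv (u1, finProdFinEquiv (u2, finProdFinEquiv (v1, v2))))
        = a v2 u2 * b v1 u1 := by
    intro u1 u2 v1 v2
    rw [hPi, ← Matrix.mulVec_mulVec, kron_one_mulVec, kron_one_row_sum,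
      commF_row_sum (fun l2 => _) v1 v2, hS1]
  -- Step 7: after the final cast.
  have hV : ∀ (u1 : Fin mR) (u2 : Fin mL) (v1 : Fin pR) (v2 : Fin pL),
      castV (show mR * (mL * (pR * pL)) = (mR * mL) * (pR * pL) by ring)
          (PiMat pR mR pL mL *ᵥ
            castV (show (mR * pR) * (mL * pL) = mR * (pR * (mL * pL)) by ring)
              (kronF (1 : Matrix (Fin (mR * pR)) (Fin (mR * pR)) ℝ) (colM (vecF a)) *ᵥ
                castV (show mR * pR = (mR * pR) * 1 by ring) (vecF b)))
          (finProdFinEquiv (finProdFinEquiv (u1, u2), finProdFinEquiv (v1, v2)))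
        = a v2 u2 * b v1 u1 := by
    intro u1 u2 v1 v2
    rw [castV_apply, e_cast_assoc', hW]
  -- Final assembly.
  funext x
  obtain ⟨⟨c, r⟩, rfl⟩ := finProdFinEquiv.surjective x
  rw [vecF_apply, Matrix.mul_apply, kron_mulVec]
  simp only [Matrix.mul_apply, sumPairE, kronF_apply, Matrix.transpose_apply, hV,
    Finset.sum_mul, Finset.mul_sum]
  exact Finset.sum_congr rfl fun u1 _ => Finset.sum_congr rfl fun u2 _ =>
    Finset.sum_congr rfl fun v1 _ => Finset.sum_congr rfl fun v2 _ => by ring
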